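/- Let M(x) be the n×n symmetric matrix over ℝ whose diagonal entries and all off-diagonal entries except those in positions {i,j} for {i,j} ranging over the edge set of an odd cycle on a subset of [n] are fixed real numbers, while the entries corresponding to the odd-cycle edges are variables. Then the determinant of M(x), as a polynomial in the variable entries, has odd total degree; consequently, there is a real choice of the variable entries making M singular. -/

import Mathlib

open Matrix

-- The symmetric `n × n` matrix of polynomials whose entries are fixed reals
-- (from `F`) except at the positions of the edges of the odd cycle
-- `c 0 — c 1 — ⋯ — c (2m+2) — c 0`, with the variables `X i` placed symmetrically.
open Classical in
noncomputable def cycMat (n m : ℕ) (c : Fin (2 * m + 3) → Fin n)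
    (F : Matrix (Fin n) (Fin n) ℝ) :
    Matrix (Fin n) (Fin n) (MvPolynomial (Fin (2 * m + 3)) ℝ) :=
  Matrix.of fun p q =>
    if h : ∃ i : Fin (2 * m + 3), (p = c i ∧ q = c (i + 1)) ∨ (p = c (i + 1) ∧ q = c i)
    then MvPolynomial.X h.choose
    else MvPolynomial.C (F p q)

namespace CycAux

section Analytic
open MvPolynomial Finset Equiv Equiv.Perm Polynomial Filter

/-! ### Univariate: odd degree real polynomial has a root -/

lemma root_aux (q : Polynomial ℝ) (h : Odd q.natDegree) (hl : 0 < q.leadingCoeff) :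
    ∃ t : ℝ, q.eval t = 0 := by
  have hd0 : 0 < q.natDegree := h.pos
  have hdeg : 0 < q.degree := Polynomial.natDegree_pos_iff_degree_pos.mp hd0
  have htop : Tendsto (fun x => q.eval x) atTop atTop :=
    q.tendsto_atTop_of_leadingCoeff_nonneg hdeg hl.le
  set r := q.comp (-Polynomial.X) with hr
  have hrdeg : r.natDegree = q.natDegree := by
    rw [hr, Polynomial.natDegree_comp]; simp
  have hrlc : r.leadingCoeff = -q.leadingCoeff := by
    rw [hr, Polynomial.leadingCoeff_comp (by simp)]
    simp [h.neg_one_pow]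
  have hrdegpos : 0 < r.degree :=
    Polynomial.natDegree_pos_iff_degree_pos.mp (by rw [hrdeg]; exact hd0)
  have hbotr : Tendsto (fun x => r.eval x) atTop atBot :=
    r.tendsto_atBot_of_leadingCoeff_nonpos hrdegpos (by rw [hrlc]; linarith)
  have hbot : Tendsto (fun x => q.eval x) atBot atBot := by
    have h2 := hbotr.comp tendsto_neg_atBot_atTop
    have h3 : ((fun x => r.eval x) ∘ (fun x : ℝ => -x)) = fun x => q.eval x := by
      funext x; simp [hr, Polynomial.eval_comp]
    rwa [h3] at h2
  have hs : Function.Surjective (fun x => q.eval x) :=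
    Continuous.surjective (q.continuous_aeval) htop hbot
  exact hs 0

lemma root_of_odd_natDegree (q : Polynomial ℝ) (h : Odd q.natDegree) :
    ∃ t : ℝ, q.eval t = 0 := by
  have hd0 : 0 < q.natDegree := h.pos
  have hq : q ≠ 0 := fun h0 => by simp [h0] at hd0
  have hlc : q.leadingCoeff ≠ 0 := Polynomial.leadingCoeff_ne_zero.mpr hq
  rcases hlc.lt_or_gt with h1 | h2
  · obtain ⟨t, ht⟩ := root_aux (-q) (by rwa [Polynomial.natDegree_neg])
      (by rw [Polynomial.leadingCoeff_neg]; linarith)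
    exact ⟨t, by simpa using ht⟩
  · exact root_aux q h h2

/-! ### Multivariate: odd total degree real polynomial has a zero -/

lemma mv_root_of_odd {k : ℕ} (P : MvPolynomial (Fin k) ℝ) (h : Odd P.totalDegree) :
    ∃ x : Fin k → ℝ, MvPolynomial.eval x P = 0 := by
  classical
  set d := P.totalDegree with hd
  have hd0 : 0 < d := h.pos
  have hP : P ≠ 0 := by
    intro h0
    rw [hd, h0, totalDegree_zero] at hd0
    exact lt_irrefl 0 hd0
  obtain ⟨s0, hs0, hs0d⟩ : ∃ s0 ∈ P.support, d = (s0.sum fun _ e => e) :=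
    P.support.exists_mem_eq_sup (Finset.nonempty_iff_ne_empty.mpr (fun h0 => hP (MvPolynomial.support_eq_empty.mp h0))) _
  have hds : ∀ s : Fin k →₀ ℕ, s.degree = s.sum fun _ e => e := fun s => by
    rw [Finsupp.degree, Finsupp.sum]; rfl
  have hH : homogeneousComponent d P ≠ 0 := by
    intro h0
    have h1 : coeff s0 (homogeneousComponent d P) = coeff s0 P := by
      rw [coeff_homogeneousComponent, if_pos]
      rw [hds]; exact hs0d.symm
    rw [h0, MvPolynomial.coeff_zero] at h1
    exact (mem_support_iff.mp hs0) h1.symm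
  obtain ⟨v, hv⟩ : ∃ v : Fin k → ℝ, MvPolynomial.eval v (homogeneousComponent d P) ≠ 0 := by
    by_contra hcon
    push_neg at hcon
    exact hH (MvPolynomial.funext fun x => by rw [hcon x, map_zero])
  set q : Polynomial ℝ :=
    MvPolynomial.aeval (fun i => Polynomial.C (v i) * Polynomial.X) P with hqdef
  have key : ∀ (s : Fin k →₀ ℕ) (a : ℝ),
      (MvPolynomial.aeval (fun i => Polynomial.C (v i) * Polynomial.X)
        (monomial s a) : Polynomial ℝ)
        = Polynomial.C (a * (s.prod fun i e => v i ^ e)) *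
            Polynomial.X ^ (s.sum fun _ e => e) := by
    intro s a
    rw [MvPolynomial.aeval_monomial]
    have h1 : (s.prod fun i e => (Polynomial.C (v i) * Polynomial.X) ^ e)
        = Polynomial.C (s.prod fun i e => v i ^ e) *
            Polynomial.X ^ (s.sum fun _ e => e) := by
      rw [Finsupp.prod, Finsupp.prod, Finsupp.sum]
      simp_rw [mul_pow, Finset.prod_mul_distrib, ← Polynomial.C_pow]
      rw [← map_prod, Finset.prod_pow_eq_pow_sum]
    rw [h1, Polynomial.algebraMap_eq, ← mul_assoc, ← Polynomial.C_mul]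
  have hqsum : q = ∑ s ∈ P.support,
      Polynomial.C (coeff s P * (s.prod fun i e => v i ^ e)) *
        Polynomial.X ^ (s.sum fun _ e => e) := by
    conv_lhs => rw [hqdef, P.as_sum, map_sum]
    exact Finset.sum_congr rfl fun s _ => key s (coeff s P)
  have hqdeg : q.natDegree ≤ d := by
    rw [hqsum]
    apply Polynomial.natDegree_sum_le_of_forall_le
    intro s hs
    refine le_trans (Polynomial.natDegree_mul_le) ?_
    simp only [Polynomial.natDegree_C, Polynomial.natDegree_X_pow, zero_add]
    exact MvPolynomial.le_totalDegree hs
  have hqcoeff : q.coeff d = MvPolynomial.eval v (homogeneousComponent d P) := by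
    rw [hqsum, homogeneousComponent_apply, map_sum]
    rw [Polynomial.finset_sum_coeff]
    rw [Finset.sum_filter]
    apply Finset.sum_congr rfl
    intro s _
    rw [Polynomial.coeff_C_mul, Polynomial.coeff_X_pow, hds s]
    by_cases hcase : (s.sum fun _ e => e) = d
    · rw [if_pos hcase, if_pos hcase.symm, mul_one, MvPolynomial.eval_monomial]
    · rw [if_neg hcase, if_neg (fun hcc => hcase hcc.symm), mul_zero]
  have hqd : q.natDegree = d :=
    le_antisymm hqdeg (Polynomial.le_natDegree_of_ne_zero (by rw [hqcoeff]; exact hv))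
  obtain ⟨t, ht⟩ := root_of_odd_natDegree q (by rwa [hqd])
  refine ⟨fun i => v i * t, ?_⟩
  have hcomp : (Polynomial.evalRingHom t).comp
      (↑(MvPolynomial.aeval (fun i => Polynomial.C (v i) * Polynomial.X) :
        MvPolynomial (Fin k) ℝ →ₐ[ℝ] Polynomial ℝ) : MvPolynomial (Fin k) ℝ →+* Polynomial ℝ)
      = MvPolynomial.eval (fun i => v i * t) := by
    apply MvPolynomial.ringHom_ext
    · intro r; simp
    · intro i; simp
  show MvPolynomial.eval (fun i => v i * t) P = 0
  rw [← hcomp]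
  show Polynomial.eval t ((MvPolynomial.aeval fun i => Polynomial.C (v i) * Polynomial.X) P) = 0
  rw [← hqdef]; exact ht
end Analytic

section Comb
open MvPolynomial Finset Equiv Equiv.Perm
open scoped Fin.NatCast Fin.CommRing


variable {n m : ℕ}

lemma fin_two_ne_zero : (2 : Fin (2*m+3)) ≠ 0 := by
  haveI : NeZero (2*m+3) := ⟨by omega⟩
  have h2 : ((2 : ℕ) : Fin (2*m+3)) = (2 : Fin (2*m+3)) := by norm_cast
  rw [← h2, Ne, Fin.natCast_eq_zero]
  intro hdvd
  have := Nat.le_of_dvd (by norm_num) hdvd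
  omega

lemma fin_inv_two : (2 : Fin (2*m+3)) * ((m : Fin (2*m+3)) + 2) = 1 := by
  haveI : NeZero (2*m+3) := ⟨by omega⟩
  have : (2 : Fin (2*m+3)) * ((m : Fin (2*m+3)) + 2) = ((2*(m+2) : ℕ) : Fin (2*m+3)) := by
    push_cast; ring
  rw [this, show 2*(m+2) = (2*m+3)+1 from by ring, Nat.cast_add, Fin.natCast_self,
    Nat.cast_one, zero_add]

lemma classify (c : Fin (2*m+3) → Fin n) (hc : Function.Injective c) (σ : Equiv.Perm (Fin n))
    (h : ∀ j : Fin (2*m+3), σ (c j) = c (j+1) ∨ σ (c j) = c (j-1)) :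
    (∀ j, σ (c j) = c (j+1)) ∨ (∀ j, σ (c j) = c (j-1)) := by
  haveI : NeZero (2*m+3) := ⟨by omega⟩
  set S : Finset (Fin (2*m+3)) := Finset.univ.filter (fun j => σ (c j) = c (j+1)) with hS
  have hmem : ∀ j, j ∈ S ↔ σ (c j) = c (j+1) := by
    intro j; rw [hS, Finset.mem_filter]; simp
  have hstep : ∀ j, j ∈ S → j + 2 ∈ S := by
    intro j hj
    rw [hmem] at hj
    by_contra hnot
    rw [hmem] at hnot
    have h2 : σ (c (j+2)) = c (j+2-1) := (h (j+2)).resolve_left hnot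
    have h3 : j + 2 - 1 = j + 1 := by ring
    rw [h3, ← hj] at h2
    have h4 : j + 2 = j := hc (σ.injective h2)
    have h5 : (2 : Fin (2*m+3)) = 0 := by
      have := congrArg (fun z => z - j) h4
      simpa [add_comm, add_sub_cancel_right] using this
    exact fin_two_ne_zero h5
  rcases S.eq_empty_or_nonempty with hS0 | ⟨j₀, hj₀⟩
  · right; intro j
    refine (h j).resolve_left ?_
    intro hh
    have : j ∈ S := (hmem j).mpr hh
    rw [hS0] at this
    exact absurd this (Finset.notMem_empty j)
  · left
    have horb : ∀ t : ℕ, j₀ + 2 * (t : Fin (2*m+3)) ∈ S := by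
      intro t; induction t with
      | zero => simpa using hj₀
      | succ t ih =>
        have he : j₀ + 2 * ((t+1 : ℕ) : Fin (2*m+3)) = (j₀ + 2*((t : ℕ) : Fin (2*m+3))) + 2 := by
          push_cast; ring
        rw [he]; exact hstep _ ih
    intro j
    have hj : j ∈ S := by
      have h6 := horb (((m : Fin (2*m+3)) + 2) * (j - j₀)).val
      rw [Fin.cast_val_eq_self] at h6
      rw [show j₀ + 2 * (((m : Fin (2*m+3))+2) * (j - j₀)) = j from ?_] at h6
      · exact h6
      · rw [← mul_assoc, fin_inv_two, one_mul, add_sub_cancel]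
    exact (hmem j).mp hj

def Adj (c : Fin (2*m+3) → Fin n) (p q : Fin n) : Prop :=
  ∃ i : Fin (2 * m + 3), (p = c i ∧ q = c (i + 1)) ∨ (p = c (i + 1) ∧ q = c i)

lemma edge_uniq {c : Fin (2*m+3) → Fin n} (hc : Function.Injective c) {p q : Fin n}
    {i j : Fin (2*m+3)}
    (hi : (p = c i ∧ q = c (i+1)) ∨ (p = c (i+1) ∧ q = c i))
    (hj : (p = c j ∧ q = c (j+1)) ∨ (p = c (j+1) ∧ q = c j)) : i = j := by
  have key : ∀ a b : Fin (2*m+3), a = b + 1 → b = a + 1 → False := by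
    intro a b h1 h2
    rw [h2] at h1
    have : (2 : Fin (2*m+3)) = 0 := by
      have := congrArg (fun z => z - a) h1
      rw [add_assoc] at this
      simpa [add_comm, add_sub_cancel_right, one_add_one_eq_two] using this.symm
    exact fin_two_ne_zero this
  rcases hi with ⟨hp, hq⟩ | ⟨hp, hq⟩ <;> rcases hj with ⟨hp', hq'⟩ | ⟨hp', hq'⟩
  · exact hc (hp.symm.trans hp')
  · exact (key i j (hc (hp.symm.trans hp')) (hc (hq'.symm.trans hq))).elim
  · exact (key j i (hc (hp'.symm.trans hp)) (hc (hq.symm.trans hq'))).elim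
  · exact hc (hq.symm.trans hq')

variable {c : Fin (2*m+3) → Fin n} {F : Matrix (Fin n) (Fin n) ℝ}

lemma cycMat_edge₁ (hc : Function.Injective c) (i : Fin (2*m+3)) :
    cycMat n m c F (c i) (c (i+1)) = X i := by
  rw [cycMat, Matrix.of_apply]
  split
  · next h => exact congrArg X (edge_uniq hc h.choose_spec (Or.inl ⟨rfl, rfl⟩))
  · next h => exact absurd ⟨i, Or.inl ⟨rfl, rfl⟩⟩ h

lemma cycMat_edge₂ (hc : Function.Injective c) (i : Fin (2*m+3)) :
    cycMat n m c F (c (i+1)) (c i) = X i := by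
  rw [cycMat, Matrix.of_apply]
  split
  · next h => exact congrArg X (edge_uniq hc h.choose_spec (Or.inr ⟨rfl, rfl⟩))
  · next h => exact absurd ⟨i, Or.inr ⟨rfl, rfl⟩⟩ h

lemma cycMat_nonedge {p q : Fin n} (h : ¬ Adj c p q) :
    cycMat n m c F p q = C (F p q) := by
  rw [cycMat, Matrix.of_apply]
  split
  · next hx => exact absurd hx h
  · rfl

/-! ### The rotation permutation -/

open Classical in
noncomputable def rot (c : Fin (2*m+3) → Fin n) (hc : Function.Injective c) :
    Equiv.Perm (Fin n) :=
  (finRotate (2*m+3)).extendDomain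
    ((Equiv.ofInjective c hc).trans (Equiv.subtypeEquivRight (fun x => by
      simp [Set.mem_range, Finset.mem_image, eq_comm])) :
      Fin (2*m+3) ≃ {x : Fin n // x ∈ Finset.univ.image c})

lemma finRotate_apply (i : Fin (2*m+3)) : finRotate (2*m+3) i = i + 1 :=
  finRotate_succ_apply i

lemma rot_apply (hc : Function.Injective c) (i : Fin (2*m+3)) :
    rot c hc (c i) = c (i + 1) := by
  classical
  have := Equiv.Perm.extendDomain_apply_image (finRotate (2*m+3))
    ((Equiv.ofInjective c hc).trans (Equiv.subtypeEquivRight (fun x => by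
      simp [Set.mem_range, Finset.mem_image, eq_comm])) :
      Fin (2*m+3) ≃ {x : Fin n // x ∈ Finset.univ.image c}) i
  rw [rot]
  convert this using 2 <;> simp [finRotate_apply]

lemma rot_fix (hc : Function.Injective c) {p : Fin n} (hp : p ∉ Finset.univ.image c) :
    rot c hc p = p := by
  classical
  exact Equiv.Perm.extendDomain_apply_not_subtype _ _ hp

lemma rot_sign (hc : Function.Injective c) : Equiv.Perm.sign (rot c hc) = 1 := by
  classical
  rw [rot, Equiv.Perm.sign_extendDomain]
  rw [show (2*m+3) = (2*m+2)+1 from rfl, sign_finRotate]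
  exact Even.neg_one_pow ⟨m+1, by omega⟩

lemma rot_inv_apply (hc : Function.Injective c) (i : Fin (2*m+3)) :
    (rot c hc)⁻¹ (c i) = c (i - 1) := by
  rw [Equiv.Perm.inv_eq_iff_eq, rot_apply hc, sub_add_cancel]

lemma rot_inv_fix (hc : Function.Injective c) {p : Fin n} (hp : p ∉ Finset.univ.image c) :
    (rot c hc)⁻¹ p = p := by
  rw [Equiv.Perm.inv_eq_iff_eq, rot_fix hc hp]

lemma rot_inv_sign (hc : Function.Injective c) : Equiv.Perm.sign (rot c hc)⁻¹ = 1 := by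
  rw [map_inv, rot_sign hc]; rfl

/-! ### The multilinear monomial -/

noncomputable def sFin (m : ℕ) : Fin (2*m+3) →₀ ℕ := ∑ i : Fin (2*m+3), Finsupp.single i 1

lemma sFin_apply (i : Fin (2*m+3)) : sFin m i = 1 := by
  rw [sFin, Finset.sum_apply']
  simp [Finsupp.single_apply]

lemma sFin_support : (sFin m).support = Finset.univ := by
  ext i; simp [Finsupp.mem_support_iff, sFin_apply]

lemma sFin_degree : ((sFin m).sum fun _ e => e) = 2*m+3 := by
  rw [Finsupp.sum, sFin_support]
  simp [sFin_apply]

lemma prod_X_eq_monomial :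
    (∏ i : Fin (2*m+3), (X i : MvPolynomial (Fin (2*m+3)) ℝ)) = monomial (sFin m) 1 := by
  rw [← prod_X_pow_eq_monomial, sFin_support]
  exact Finset.prod_congr rfl fun i _ => by rw [sFin_apply, pow_one]

/-! ### Degree bounds -/

lemma entry_deg (hc : Function.Injective c) (p q : Fin n) :
    (cycMat n m c F p q).totalDegree ≤ if q ∈ Finset.univ.image c then 1 else 0 := by
  classical
  by_cases hA : Adj c p q
  · obtain ⟨i, hi⟩ := hA
    have hq : q ∈ Finset.univ.image c := by
      rcases hi with ⟨_, hq⟩ | ⟨_, hq⟩ <;>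
        exact hq ▸ Finset.mem_image_of_mem c (Finset.mem_univ _)
    rw [if_pos hq]
    obtain ⟨hp, hq'⟩ | ⟨hp, hq'⟩ := hi
    · rw [hp, hq', cycMat_edge₁ hc, totalDegree_X]
    · rw [hp, hq', cycMat_edge₂ hc, totalDegree_X]
  · rw [cycMat_nonedge hA, totalDegree_C]
    exact Nat.zero_le _

lemma card_V (hc : Function.Injective c) :
    (Finset.univ.image c).card = 2*m+3 := by
  rw [Finset.card_image_of_injective _ hc, Finset.card_univ, Fintype.card_fin]

lemma det_deg_le (hc : Function.Injective c) :
    (cycMat n m c F).det.totalDegree ≤ 2*m+3 := by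
  classical
  rw [Matrix.det_apply']
  apply totalDegree_finsetSum_le
  intro σ _
  refine le_trans (totalDegree_mul _ _) ?_
  have h1 : ((((Equiv.Perm.sign σ : ℤ) : MvPolynomial (Fin (2*m+3)) ℝ)).totalDegree) = 0 := by
    rw [← map_intCast (C : ℝ →+* MvPolynomial (Fin (2*m+3)) ℝ), totalDegree_C]
  rw [h1, zero_add]
  refine le_trans (totalDegree_finset_prod _ _) ?_
  refine le_trans (Finset.sum_le_sum fun p _ => entry_deg hc (σ p) p) ?_
  rw [Finset.sum_ite_mem, Finset.univ_inter, Finset.sum_const, smul_eq_mul, mul_one,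
    card_V hc]

/-! ### Contribution of terms -/

lemma bad_coeff (hc : Function.Injective c) (σ : Equiv.Perm (Fin n)) {j : Fin (2*m+3)}
    (hbad : ¬ Adj c (σ (c j)) (c j)) :
    coeff (sFin m) (∏ p, cycMat n m c F (σ p) p) = 0 := by
  classical
  apply coeff_eq_zero_of_totalDegree_lt
  have hsum : ∑ i ∈ (sFin m).support, sFin m i = 2*m+3 := by
    rw [sFin_support]; simp [sFin_apply]
  rw [hsum, ← Finset.mul_prod_erase Finset.univ _ (Finset.mem_univ (c j))]
  refine lt_of_le_of_lt (totalDegree_mul _ _) ?_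
  rw [cycMat_nonedge hbad, totalDegree_C, zero_add]
  refine lt_of_le_of_lt (le_trans (totalDegree_finset_prod _ _)
    (Finset.sum_le_sum fun p _ => entry_deg hc (σ p) p)) ?_
  have h2 : ∑ p ∈ Finset.univ.erase (c j), (if p ∈ Finset.univ.image c then 1 else 0)
      = ((Finset.univ.image c).erase (c j)).card := by
    rw [Finset.sum_ite_mem,
      show (Finset.univ.erase (c j)) ∩ (Finset.univ.image c)
        = (Finset.univ.image c).erase (c j) from by ext p; simp [and_comm],
      Finset.sum_const, smul_eq_mul, mul_one]
  rw [h2, Finset.card_erase_of_mem (Finset.mem_image_of_mem c (Finset.mem_univ j)), card_V hc]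
  omega

lemma nonadj_of_not_mem (hp : p ∉ Finset.univ.image c) (q : Fin n) : ¬ Adj c q p := by
  rintro ⟨i, ⟨_, h2⟩ | ⟨_, h2⟩⟩ <;>
    exact hp (h2 ▸ Finset.mem_image_of_mem c (Finset.mem_univ _))

lemma good_term_plus (hc : Function.Injective c) (σ : Equiv.Perm (Fin n))
    (hσ : ∀ j, σ (c j) = c (j+1)) :
    (∏ p, cycMat n m c F (σ p) p)
      = monomial (sFin m) 1 * C (∏ p ∈ (Finset.univ.image c)ᶜ, F (σ p) p) := by
  classical
  rw [← Finset.prod_mul_prod_compl (Finset.univ.image c)]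
  congr 1
  · rw [Finset.prod_image (fun a _ b _ h => hc h), ← prod_X_eq_monomial]
    refine Finset.prod_congr rfl fun i _ => ?_
    rw [hσ i, cycMat_edge₂ hc]
  · rw [map_prod]
    exact Finset.prod_congr rfl fun p hp =>
      cycMat_nonedge (nonadj_of_not_mem (Finset.mem_compl.mp hp) _)

lemma good_term_minus (hc : Function.Injective c) (σ : Equiv.Perm (Fin n))
    (hσ : ∀ j, σ (c j) = c (j-1)) :
    (∏ p, cycMat n m c F (σ p) p)
      = monomial (sFin m) 1 * C (∏ p ∈ (Finset.univ.image c)ᶜ, F (σ p) p) := by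
  classical
  rw [← Finset.prod_mul_prod_compl (Finset.univ.image c)]
  congr 1
  · rw [Finset.prod_image (fun a _ b _ h => hc h), ← prod_X_eq_monomial]
    rw [← Equiv.prod_comp (Equiv.subRight (1 : Fin (2*m+3))) (fun i => (X i : MvPolynomial (Fin (2*m+3)) ℝ))]
    refine Finset.prod_congr rfl fun i _ => ?_
    have h1 : c i = c ((i - 1) + 1) := by rw [sub_add_cancel]
    rw [hσ i, h1, cycMat_edge₁ hc]
    rfl
  · rw [map_prod]
    exact Finset.prod_congr rfl fun p hp =>
      cycMat_nonedge (nonadj_of_not_mem (Finset.mem_compl.mp hp) _)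

lemma coeff_good (r : ℝ) :
    coeff (sFin m) ((monomial (sFin m) 1 :  MvPolynomial (Fin (2*m+3)) ℝ) * C r) = r := by
  rw [show (monomial (sFin m) 1 : MvPolynomial (Fin (2*m+3)) ℝ) * C r
      = C r * monomial (sFin m) 1 from mul_comm _ _,
    coeff_C_mul, coeff_monomial, if_pos rfl, mul_one]

lemma coset_sum (hc : Function.Injective c) (ρ : Equiv.Perm (Fin n))
    (hρ : ∀ p, p ∉ Finset.univ.image c → ρ p = p) :
    ∑ σ ∈ Finset.univ.filter
        (fun σ : Equiv.Perm (Fin n) => ∀ p ∈ Finset.univ.image c, σ p = ρ p),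
      (((Equiv.Perm.sign σ : ℤ) : ℝ) * ∏ p ∈ (Finset.univ.image c)ᶜ, F (σ p) p)
    = ((Equiv.Perm.sign ρ : ℤ) : ℝ) *
      (F.submatrix (Subtype.val : {p : Fin n // p ∉ Finset.univ.image c} → Fin n)
        Subtype.val).det := by
  classical
  have hfixmap : ∀ (π : Equiv.Perm (Fin n)), (∀ p ∈ Finset.univ.image c, π p = p) →
      ∀ p : Fin n, p ∉ Finset.univ.image c ↔ π p ∉ Finset.univ.image c := by
    intro π hπ p
    constructor
    · intro hp hcon
      have h1 := hπ _ hcon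
      have hpp : π p = p := π.injective h1
      rw [hpp] at hcon; exact hp hcon
    · intro hp hcon
      have := hπ p hcon
      rw [this] at hp; exact hp hcon
  have himg : Finset.univ.filter
        (fun σ : Equiv.Perm (Fin n) => ∀ p ∈ Finset.univ.image c, σ p = ρ p)
      = Finset.image (fun τ : Equiv.Perm {p : Fin n // p ∉ Finset.univ.image c} =>
          ρ * Equiv.Perm.ofSubtype τ) Finset.univ := by
    ext σ
    rw [Finset.mem_filter, Finset.mem_image]
    simp only [Finset.mem_univ, true_and]
    constructor
    · intro hσ
      have hfix : ∀ p ∈ Finset.univ.image c, (ρ⁻¹ * σ) p = p := by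
        intro p hp
        simp [Equiv.Perm.mul_apply, hσ p hp]
      have h1 := fun x => (hfixmap _ hfix x).symm
      refine ⟨(ρ⁻¹ * σ).subtypePerm h1, ?_⟩
      rw [Equiv.Perm.ofSubtype_subtypePerm h1 ?h2]
      · rw [mul_inv_cancel_left]
      · intro x hx
        by_contra hxV
        exact hx (hfix x hxV)
    · rintro ⟨τ, rfl⟩
      intro p hp
      have h3 : Equiv.Perm.ofSubtype τ p = p :=
        Equiv.Perm.ofSubtype_apply_of_not_mem τ (not_not_intro hp)
      simp [Equiv.Perm.mul_apply, h3]
  rw [himg, Finset.sum_image ?hinj]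
  case hinj =>
    intro τ₁ _ τ₂ _ h
    have h2 := mul_left_cancel h
    refine Equiv.ext fun x => Subtype.ext ?_
    have h4 := congrArg (fun (π : Equiv.Perm (Fin n)) => π ↑x) h2
    simpa only [Equiv.Perm.ofSubtype_apply_coe] using h4
  rw [Matrix.det_apply', Finset.mul_sum]
  refine Finset.sum_congr rfl fun τ _ => ?_
  have hsign : ((Equiv.Perm.sign (ρ * Equiv.Perm.ofSubtype τ) : ℤ) : ℝ)
      = ((Equiv.Perm.sign ρ : ℤ) : ℝ) * ((Equiv.Perm.sign τ : ℤ) : ℝ) := by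
    rw [_root_.map_mul, Equiv.Perm.sign_ofSubtype]
    push_cast
    ring
  have hprod : ∏ p ∈ (Finset.univ.image c)ᶜ, F ((ρ * Equiv.Perm.ofSubtype τ) p) p
      = ∏ x : {p : Fin n // p ∉ Finset.univ.image c},
          (F.submatrix (Subtype.val : {p : Fin n // p ∉ Finset.univ.image c} → Fin n)
            Subtype.val) (τ x) x := by
    rw [Finset.prod_subtype ((Finset.univ.image c)ᶜ)
      (fun x => Finset.mem_compl) (fun p => F ((ρ * Equiv.Perm.ofSubtype τ) p) p)]
    refine Finset.prod_congr rfl fun x _ => ?_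
    have h5 : (ρ * Equiv.Perm.ofSubtype τ) ↑x = ↑(τ x) := by
      rw [Equiv.Perm.mul_apply, Equiv.Perm.ofSubtype_apply_coe]
      exact hρ _ (τ x).2
    rw [h5]
    rfl
  rw [hsign, hprod, mul_assoc]

lemma fin_one_ne_neg_one : (1 : Fin (2*m+3)) ≠ 0 - 1 := by
  intro h
  have h2 : (2 : Fin (2*m+3)) = 0 := by
    have := congrArg (fun z => z + 1) h
    simpa [one_add_one_eq_two, sub_add_cancel] using this
  exact fin_two_ne_zero h2

lemma det_coeff (hc : Function.Injective c) :
    coeff (sFin m) (cycMat n m c F).det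
      = 2 * (F.submatrix
          (Subtype.val : {p : Fin n // p ∉ Finset.univ.image c} → Fin n) Subtype.val).det := by
  classical
  rw [Matrix.det_apply', MvPolynomial.coeff_sum]
  set Aplus : Finset (Equiv.Perm (Fin n)) := Finset.univ.filter
    (fun σ : Equiv.Perm (Fin n) => ∀ p ∈ Finset.univ.image c, σ p = rot c hc p) with hAplus
  set Aminus : Finset (Equiv.Perm (Fin n)) := Finset.univ.filter
    (fun σ : Equiv.Perm (Fin n) => ∀ p ∈ Finset.univ.image c, σ p = (rot c hc)⁻¹ p) with hAminus
  have memAplus : ∀ σ : Equiv.Perm (Fin n), σ ∈ Aplus ↔ ∀ j, σ (c j) = c (j+1) := by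
    intro σ
    rw [hAplus, Finset.mem_filter]
    constructor
    · intro ⟨_, h⟩ j
      rw [h (c j) (Finset.mem_image_of_mem c (Finset.mem_univ j)), rot_apply hc]
    · intro h
      refine ⟨Finset.mem_univ _, fun p hp => ?_⟩
      obtain ⟨j, _, rfl⟩ := Finset.mem_image.mp hp
      rw [h j, rot_apply hc]
  have memAminus : ∀ σ : Equiv.Perm (Fin n), σ ∈ Aminus ↔ ∀ j, σ (c j) = c (j-1) := by
    intro σ
    rw [hAminus, Finset.mem_filter]
    constructor
    · intro ⟨_, h⟩ j
      rw [h (c j) (Finset.mem_image_of_mem c (Finset.mem_univ j)), rot_inv_apply hc]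
    · intro h
      refine ⟨Finset.mem_univ _, fun p hp => ?_⟩
      obtain ⟨j, _, rfl⟩ := Finset.mem_image.mp hp
      rw [h j, rot_inv_apply hc]
  have hdisj : ∀ σ : Equiv.Perm (Fin n), σ ∈ Aplus → σ ∈ Aminus → False := by
    intro σ h1 h2
    have e1 := (memAplus σ).mp h1 0
    have e2 := (memAminus σ).mp h2 0
    rw [e2] at e1
    exact fin_one_ne_neg_one (hc e1.symm)
  have hterm : ∀ σ : Equiv.Perm (Fin n),
      coeff (sFin m) (((Equiv.Perm.sign σ : ℤ) : MvPolynomial (Fin (2*m+3)) ℝ)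
          * ∏ p, cycMat n m c F (σ p) p)
        = (if σ ∈ Aplus then ((Equiv.Perm.sign σ : ℤ) : ℝ)
              * ∏ p ∈ (Finset.univ.image c)ᶜ, F (σ p) p else 0)
          + (if σ ∈ Aminus then ((Equiv.Perm.sign σ : ℤ) : ℝ)
              * ∏ p ∈ (Finset.univ.image c)ᶜ, F (σ p) p else 0) := by
    intro σ
    rw [← map_intCast (C : ℝ →+* MvPolynomial (Fin (2*m+3)) ℝ), coeff_C_mul]
    by_cases hplus : ∀ j, σ (c j) = c (j+1)
    · rw [if_pos ((memAplus σ).mpr hplus), if_neg (fun h => hdisj σ ((memAplus σ).mpr hplus) h),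
        good_term_plus hc σ hplus, coeff_good, add_zero]
    · by_cases hminus : ∀ j, σ (c j) = c (j-1)
      · rw [if_neg (fun h => hdisj σ h ((memAminus σ).mpr hminus)), if_pos ((memAminus σ).mpr hminus),
          good_term_minus hc σ hminus, coeff_good, zero_add]
      · rw [if_neg (fun h => hplus ((memAplus σ).mp h)), if_neg (fun h => hminus ((memAminus σ).mp h)),
          add_zero]
        -- there must be a bad vertex
        have hbad : ∃ j, ¬ Adj c (σ (c j)) (c j) := by
          by_contra hcon
          push_neg at hcon
          have hdich : ∀ j : Fin (2*m+3), σ (c j) = c (j+1) ∨ σ (c j) = c (j-1) := by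
            intro j
            obtain ⟨i, ⟨hp, hq⟩ | ⟨hp, hq⟩⟩ := hcon j
            · right
              have hij : j = i + 1 := hc hq
              have : i = j - 1 := by rw [hij]; ring
              rw [hp, this]
            · left
              have hij : i = j := (hc hq).symm
              rw [hp, hij]
          rcases classify c hc σ hdich with h | h
          · exact hplus h
          · exact hminus h
        obtain ⟨j, hj⟩ := hbad
        rw [bad_coeff hc σ hj, mul_zero]
  rw [Finset.sum_congr rfl fun σ _ => hterm σ, Finset.sum_add_distrib]
  have hsplit : ∀ (A : Finset (Equiv.Perm (Fin n))),
      (∑ σ : Equiv.Perm (Fin n), if σ ∈ A then ((Equiv.Perm.sign σ : ℤ) : ℝ)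
          * ∏ p ∈ (Finset.univ.image c)ᶜ, F (σ p) p else 0)
        = ∑ σ ∈ A, ((Equiv.Perm.sign σ : ℤ) : ℝ)
            * ∏ p ∈ (Finset.univ.image c)ᶜ, F (σ p) p := by
    intro A
    rw [Finset.sum_ite_mem, Finset.univ_inter]
  rw [hsplit Aplus, hsplit Aminus, hAplus, hAminus, coset_sum hc (rot c hc) (fun p hp => rot_fix hc hp),
    coset_sum hc (rot c hc)⁻¹ (fun p hp => rot_inv_fix hc hp), rot_sign hc, rot_inv_sign hc]
  norm_num
  ring

end Comb

end CycAux

/-- For a symmetric matrix whose unknown entries form the edge set of an odd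
cycle (all other entries generic fixed reals, genericity being expressed by the
nonvanishing of the complementary principal minor), the determinant is a
polynomial of odd total degree in the unknown entries; consequently some real
choice of the unknowns makes the matrix singular. -/
theorem det_odd_cycle_pattern (n m : ℕ) (c : Fin (2 * m + 3) → Fin n)
    (hc : Function.Injective c) (F : Matrix (Fin n) (Fin n) ℝ) (hF : F.IsSymm)
    (hgen : (F.submatrix
        (Subtype.val : {p : Fin n // p ∉ Finset.univ.image c} → Fin n)
        Subtype.val).det ≠ 0) :
    Odd (cycMat n m c F).det.totalDegree ∧
      ∃ x : Fin (2 * m + 3) → ℝ,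
        ((cycMat n m c F).map (MvPolynomial.eval x)).det = 0 := by
  classical
  have hdeg_le := CycAux.det_deg_le (F := F) hc
  have hco := CycAux.det_coeff (F := F) hc
  have hne : MvPolynomial.coeff (CycAux.sFin m) (cycMat n m c F).det ≠ 0 := by
    rw [hco]; exact mul_ne_zero two_ne_zero hgen
  have hmem : CycAux.sFin m ∈ (cycMat n m c F).det.support :=
    MvPolynomial.mem_support_iff.mpr hne
  have hge : 2*m+3 ≤ (cycMat n m c F).det.totalDegree := by
    have h1 := MvPolynomial.le_totalDegree hmem
    rwa [CycAux.sFin_degree] at h1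
  have hdeg : (cycMat n m c F).det.totalDegree = 2*m+3 := le_antisymm hdeg_le hge
  have hodd : Odd (cycMat n m c F).det.totalDegree := by
    rw [hdeg]; exact ⟨m+1, by ring⟩
  refine ⟨hodd, ?_⟩
  obtain ⟨x, hx⟩ := CycAux.mv_root_of_odd _ hodd
  refine ⟨x, ?_⟩
  have h2 := (MvPolynomial.eval x).map_det (cycMat n m c F)
  exact h2.symm.trans hx
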